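/- Let G be a profinite group, A a discrete abelian group, m ≥ 0, and N an open normal subgroup of G. Give Map_c(G^{m+1}, A) the G-action (g · f)(g_1, ..., g_{m+1}) = f(g_1 g, g_2, ..., g_{m+1}). Then the N-fixed points satisfy a natural isomorphism of abelian groups Map_c(G^{m+1}, A)^N ≅ ∏_{G/N} Map_c(G^m, A), a product of copies of Map_c(G^m, A) indexed by the finite set G/N. -/

import Mathlib

open scoped Pointwise

variable (G : Type*) [Group G] [TopologicalSpace G] [IsTopologicalGroup G]
  [CompactSpace G] [T2Space G] [TotallyDisconnectedSpace G]
  (A : Type*) [AddCommGroup A] [TopologicalSpace A] [DiscreteTopology A]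
  [IsTopologicalAddGroup A]

/-- The `N`-fixed points of `Map_c(G^{m+1}, A)` under the action
`(g · f)(g₁, …, g_{m+1}) = f(g₁g, g₂, …, g_{m+1})`, as an additive subgroup.
Here `G^{m+1}` is modeled as `G × (Fin m → G)`. -/
def fixedMaps (m : ℕ) (N : Subgroup G) : AddSubgroup C(G × (Fin m → G), A) where
  carrier := {f | ∀ n ∈ N, ∀ x : G × (Fin m → G), f (x.1 * n, x.2) = f x}
  add_mem' := by
    intro a b ha hb n hn x
    simp [ha n hn x, hb n hn x]
  zero_mem' := by
    intro n hn x
    simp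
  neg_mem' := by
    intro a ha n hn x
    simp [ha n hn x]

/-- For a profinite group `G`, a discrete abelian group `A`, `m ≥ 0` and an open normal
subgroup `N ⊴ G`, there is an isomorphism of abelian groups
`Map_c(G^{m+1}, A)^N ≅ ∏_{G/N} Map_c(G^m, A)`. -/
theorem stmt5 (m : ℕ) (N : Subgroup G) [N.Normal] (hNo : IsOpen (N : Set G)) :
    Nonempty ((fixedMaps G A m N) ≃+ ((G ⧸ N) → C((Fin m → G), A))) := by
  haveI : DiscreteTopology (G ⧸ N) := QuotientGroup.discreteTopology hNo
  refine ⟨{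
    toFun := fun f q => ⟨fun x => (f : C(G × (Fin m → G), A)) (q.out, x),
      (f : C(G × (Fin m → G), A)).continuous.comp (by fun_prop)⟩
    invFun := fun F => ⟨
      (ContinuousMap.uncurry ⟨F, continuous_of_discreteTopology⟩).comp
        ⟨fun p => (QuotientGroup.mk p.1, p.2), (continuous_quotient_mk'.comp continuous_fst).prodMk continuous_snd⟩,
      by
        intro n hn x
        simp [ContinuousMap.uncurry, Function.uncurry,
          QuotientGroup.mk_mul_of_mem x.1 hn]⟩
    left_inv := by
      intro f
      ext x
      obtain ⟨n, hn⟩ := QuotientGroup.mk_out_eq_mul N x.1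
      simp only [ContinuousMap.comp_apply, ContinuousMap.coe_mk,
        ContinuousMap.uncurry, Function.uncurry, ContinuousMap.coe_mk, hn]
      exact f.2 n n.2 x
    right_inv := by
      intro F
      ext q x
      simp only [ContinuousMap.coe_mk, AddSubgroup.coe_mk, ContinuousMap.comp_apply,
        ContinuousMap.uncurry, Function.uncurry]
      simp
    map_add' := by
      intro f g
      ext q x
      rfl }⟩
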